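/- Let a, b ∈ L(H) be nonzero projections and let λ, μ ∈ ℝ satisfy aba = λ·a and bab = μ·b. Then λ = μ and 0 ≤ λ ≤ 1. Moreover λ = 0 if and only if ab = 0, and λ = 1 if and only if a = b. -/

import Mathlib

variable {H : Type*} [NormedAddCommGroup H] [InnerProductSpace ℂ H] [CompleteSpace H]

set_option maxHeartbeats 1000000 in
/-- Let `a, b ∈ L(H)` be nonzero projections with `aba = λ·a` and
`bab = μ·b` for real numbers `λ, μ`.  Then `λ = μ`, `0 ≤ λ ≤ 1`, `λ = 0 ↔ ab = 0`
and `λ = 1 ↔ a = b`. -/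
theorem projection_pair_spectral_parameter (a b : H →L[ℂ] H) (l m : ℝ)
    (hasa : IsSelfAdjoint a) (haidem : a * a = a) (ha0 : a ≠ 0)
    (hbsa : IsSelfAdjoint b) (hbidem : b * b = b) (hb0 : b ≠ 0)
    (haba : a * b * a = l • a) (hbab : b * a * b = m • b) :
    l = m ∧ 0 ≤ l ∧ l ≤ 1 ∧ (l = 0 ↔ a * b = 0) ∧ (l = 1 ↔ a = b) := by
  have haa : ∀ x y : H, (inner ℂ (a x) y : ℂ) = inner ℂ x (a y) := by
    intro x y
    conv_lhs => rw [← hasa.adjoint_eq]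
    exact ContinuousLinearMap.adjoint_inner_left a y x
  have hbb : ∀ x y : H, (inner ℂ (b x) y : ℂ) = inner ℂ x (b y) := by
    intro x y
    conv_lhs => rw [← hbsa.adjoint_eq]
    exact ContinuousLinearMap.adjoint_inner_left b y x
  have haid : ∀ x : H, a (a x) = a x := by
    intro x; rw [← ContinuousLinearMap.mul_apply, haidem]
  have hbid : ∀ x : H, b (b x) = b x := by
    intro x; rw [← ContinuousLinearMap.mul_apply, hbidem]
  have pb : ∀ v : H, (inner ℂ (b v) v : ℂ) = (‖b v‖ : ℂ)^2 := by
    intro v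
    calc (inner ℂ (b v) v : ℂ) = inner ℂ v (b v) := hbb v v
    _ = inner ℂ v (b (b v)) := by rw [hbid]
    _ = inner ℂ (b v) (b v) := (hbb v (b v)).symm
    _ = (‖b v‖ : ℂ)^2 := by
        rw [inner_self_eq_norm_sq_to_K]; norm_cast
  -- key identity
  have key : ∀ x : H, (l : ℂ) * (‖a x‖ : ℂ)^2 = (‖b (a x)‖ : ℂ)^2 := by
    intro x
    have h1 : (inner ℂ ((a * b * a) x) x : ℂ) = inner ℂ ((l : ℝ) • a x) x := by
      rw [haba]; simp
    have h2 : (inner ℂ ((a * b * a) x) x : ℂ) = inner ℂ (b (a x)) (a x) := by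
      simp only [ContinuousLinearMap.mul_apply]
      exact haa (b (a x)) x
    have h3 : (inner ℂ ((l : ℝ) • a x) x : ℂ) = (l : ℂ) * inner ℂ (a x) x := by
      rw [show ((l : ℝ) • a x : H) = ((l : ℂ)) • a x from (Complex.coe_smul l (a x)).symm,
        inner_smul_left]
      simp [Complex.conj_ofReal]
    have pa : (inner ℂ (a x) x : ℂ) = (‖a x‖ : ℂ)^2 := by
      calc (inner ℂ (a x) x : ℂ) = inner ℂ x (a x) := haa x x
      _ = inner ℂ x (a (a x)) := by rw [haid]
      _ = inner ℂ (a x) (a x) := (haa x (a x)).symm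
      _ = (‖a x‖ : ℂ)^2 := by rw [inner_self_eq_norm_sq_to_K]; norm_cast
    rw [← pb (a x), ← h2, h1, h3, pa]
  have keyR : ∀ x : H, l * ‖a x‖^2 = ‖b (a x)‖^2 := by
    intro x
    have := key x
    exact_mod_cast this
  -- b is norm-nonincreasing
  have bnorm : ∀ v : H, ‖b v‖ ≤ ‖v‖ := by
    intro v
    rcases eq_or_ne (b v) 0 with h | h
    · simp [h]
    · have h1 : ‖(inner ℂ (b v) v : ℂ)‖ ≤ ‖b v‖ * ‖v‖ := norm_inner_le_norm _ _
      rw [pb v] at h1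
      have h2 : ‖((‖b v‖ : ℂ))^2‖ = ‖b v‖^2 := by
        rw [norm_pow, Complex.norm_real, norm_norm]
      rw [h2] at h1
      have hbv : 0 < ‖b v‖ := norm_pos_iff.mpr h
      nlinarith
  -- a vector in the range of a
  obtain ⟨x₀, hx₀⟩ : ∃ x : H, a x ≠ 0 := by
    by_contra h
    push_neg at h
    exact ha0 (ContinuousLinearMap.ext fun x => by simp [h x])
  have hv : 0 < ‖a x₀‖ := norm_pos_iff.mpr hx₀
  have hl0 : 0 ≤ l := by
    have := keyR x₀
    nlinarith [sq_nonneg ‖b (a x₀)‖, pow_pos hv 2]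
  have hl1 : l ≤ 1 := by
    have h1 := keyR x₀
    have h2 : ‖b (a x₀)‖^2 ≤ ‖a x₀‖^2 :=
      pow_le_pow_left₀ (norm_nonneg _) (bnorm (a x₀)) 2
    nlinarith [pow_pos hv 2]
  -- l = 0 ↔ ab = 0
  have hstar_ba : Star.star (b * a) = a * b := by
    rw [star_mul, hasa.star_eq, hbsa.star_eq]
  have hiff0 : l = 0 ↔ a * b = 0 := by
    constructor
    · intro hl
      subst hl
      have hba : b * a = 0 := by
        ext x
        have h := keyR x
        simp only [zero_mul] at h
        have : b (a x) = 0 := by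
          have h' : ‖b (a x)‖^2 = 0 := by linarith
          exact norm_eq_zero.mp (pow_eq_zero_iff two_ne_zero |>.mp h')
        simpa [ContinuousLinearMap.mul_apply] using this
      rw [← hstar_ba, hba, star_zero]
    · intro hab
      have h : l • a = 0 := by rw [← haba, hab, zero_mul]
      rcases smul_eq_zero.mp h with h | h
      · exact h
      · exact absurd h ha0
  have hlm : l = m := by
    by_cases hab : a * b = 0
    · have hl : l = 0 := hiff0.mpr hab
      have hba : b * a = 0 := by
        have := congrArg Star.star hab
        rwa [star_mul, hasa.star_eq, hbsa.star_eq, star_zero] at this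
      have h : m • b = 0 := by rw [← hbab, mul_assoc, hab, mul_zero]
      rcases smul_eq_zero.mp h with h | h
      · rw [hl, h]
      · exact absurd h hb0
    · have h1 : l • (a * b) = m • (a * b) := by
        calc l • (a * b) = (l • a) * b := by rw [smul_mul_assoc]
        _ = (a * b * a) * b := by rw [haba]
        _ = a * (b * a * b) := by rw [mul_assoc, mul_assoc, mul_assoc]
        _ = a * (m • b) := by rw [hbab]
        _ = m • (a * b) := by rw [mul_smul_comm]
      have h2 : (l - m) • (a * b) = 0 := by rw [sub_smul, h1, sub_self]
      rcases smul_eq_zero.mp h2 with h | h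
      · linarith [sub_eq_zero.mp h]
      · exact absurd h hab
  refine ⟨hlm, hl0, hl1, hiff0, ?_⟩
  constructor
  · intro hl
    -- l = 1 → a = b
    have hm1 : m = 1 := by rw [← hlm, hl]
    have hba : b * a = a := by
      ext x
      have h1 : ‖b (a x)‖^2 = ‖a x‖^2 := by
        have := keyR x; rw [hl, one_mul] at this; linarith
      have h2 : (inner ℂ (a x - b (a x)) (a x - b (a x)) : ℂ) = 0 := by
        rw [inner_sub_sub_self]
        have e1 : (inner ℂ (b (a x)) (a x) : ℂ) = (‖b (a x)‖ : ℂ)^2 := pb (a x)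
        have e2 : (inner ℂ (a x) (b (a x)) : ℂ) = (‖b (a x)‖ : ℂ)^2 := by
          rw [← inner_conj_symm, e1]
          simp
        have e3 : (inner ℂ (a x) (a x) : ℂ) = (‖a x‖ : ℂ)^2 := by
          rw [inner_self_eq_norm_sq_to_K]; norm_cast
        have e4 : (inner ℂ (b (a x)) (b (a x)) : ℂ) = (‖b (a x)‖ : ℂ)^2 := by
          rw [inner_self_eq_norm_sq_to_K]; norm_cast
        rw [e1, e2, e3, e4]
        have : (‖a x‖ : ℂ)^2 = (‖b (a x)‖ : ℂ)^2 := by exact_mod_cast h1.symm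
        rw [this]; ring
      have h3 : a x - b (a x) = 0 := inner_self_eq_zero.mp h2
      have : b (a x) = a x := (sub_eq_zero.mp h3).symm
      simpa [ContinuousLinearMap.mul_apply] using this
    have hab : a * b = a := by rw [← hstar_ba, hba, hasa.star_eq]
    have : b = a := by
      have : m • b = a := by rw [← hbab, mul_assoc, ← mul_assoc, hba, hab]
      rwa [hm1, one_smul] at this
    exact this.symm
  · intro hab
    subst hab
    have : l • a = a := by rw [← haba, haidem, haidem]
    have h2 : (l - 1) • a = 0 := by rw [sub_smul, this, one_smul, sub_self]
    rcases smul_eq_zero.mp h2 with h | h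
    · linarith [sub_eq_zero.mp h]
    · exact absurd h ha0
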